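/- For every Δt₀ ∈ (0,1] there exists a constant C(Δt₀) ∈ (0,∞) such that |Ψ_t″(z)| ≤ C(Δt₀)(1 + |z|) for all t ∈ [0,Δt₀] and all z ∈ ℝ. -/

import Mathlib

noncomputable section

/-- The flow map `Φ_t(z) = z / √(z² + (1 - z²) e^{-2t})` of the ODE `ż = z - z³`. -/
def Phi (t z : ℝ) : ℝ := z / Real.sqrt (z ^ 2 + (1 - z ^ 2) * Real.exp (-2 * t))

/-- `Ψ_t(z) = (Φ_t(z) - z)/t` for `t > 0`, and `Ψ_0(z) = z - z³`. -/
def Psi (t z : ℝ) : ℝ := if t = 0 then z - z ^ 3 else (Phi t z - z) / t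

lemma q_pos {a : ℝ} (ha : 0 < a) (ha1 : a ≤ 1) (z : ℝ) : 0 < a + (1 - a) * z ^ 2 :=
  add_pos_of_pos_of_nonneg ha (mul_nonneg (by linarith) (sq_nonneg z))

lemma hasDerivAt_q (a z : ℝ) :
    HasDerivAt (fun z : ℝ => a + (1 - a) * z ^ 2) (2 * (1 - a) * z) z := by
  have := ((hasDerivAt_pow 2 z).const_mul (1 - a)).const_add a
  refine this.congr_deriv ?_
  push_cast
  ring

lemma hasDerivAt_aux {a : ℝ} (ha : 0 < a) (ha1 : a ≤ 1) (z : ℝ) :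
    HasDerivAt (fun z : ℝ => z * (a + (1 - a) * z ^ 2) ^ (-(1/2) : ℝ))
      (a * (a + (1 - a) * z ^ 2) ^ (-(3/2) : ℝ)) z := by
  have hQ := q_pos ha ha1 z
  have hpow := (hasDerivAt_q a z).rpow_const (p := (-(1/2) : ℝ)) (Or.inl hQ.ne')
  have hmul := (hasDerivAt_id z).mul hpow
  simp only [id_eq] at hmul
  refine hmul.congr_deriv ?_
  have h1 : (a + (1 - a) * z ^ 2) ^ (-(1/2) : ℝ)
      = (a + (1 - a) * z ^ 2) * (a + (1 - a) * z ^ 2) ^ (-(3/2) : ℝ) := by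
    rw [show (-(1/2) : ℝ) = 1 + (-(3/2)) by norm_num, Real.rpow_add hQ, Real.rpow_one]
  have h2 : (-(1/2) : ℝ) - 1 = -(3/2) := by norm_num
  rw [h1, h2]
  ring

lemma hasDerivAt_aux2 {a : ℝ} (ha : 0 < a) (ha1 : a ≤ 1) (z : ℝ) :
    HasDerivAt (fun z : ℝ => a * (a + (1 - a) * z ^ 2) ^ (-(3/2) : ℝ))
      ((-3) * (a * ((1 - a) * z)) * (a + (1 - a) * z ^ 2) ^ (-(5/2) : ℝ)) z := by
  have hQ := q_pos ha ha1 z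
  have hpow := (hasDerivAt_q a z).rpow_const (p := (-(3/2) : ℝ)) (Or.inl hQ.ne')
  have := hpow.const_mul a
  refine this.congr_deriv ?_
  have h2 : (-(3/2) : ℝ) - 1 = -(5/2) := by norm_num
  rw [h2]
  ring

lemma Phi_eq {t : ℝ} (ht : 0 ≤ t) :
    Phi t = fun z : ℝ =>
      z * (Real.exp (-2 * t) + (1 - Real.exp (-2 * t)) * z ^ 2) ^ (-(1/2) : ℝ) := by
  funext z
  have ha : 0 < Real.exp (-2 * t) := Real.exp_pos _
  have ha1 : Real.exp (-2 * t) ≤ 1 := Real.exp_le_one_iff.mpr (by linarith)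
  have hQ := q_pos ha ha1 z
  unfold Phi
  rw [show z ^ 2 + (1 - z ^ 2) * Real.exp (-2 * t)
      = Real.exp (-2 * t) + (1 - Real.exp (-2 * t)) * z ^ 2 by ring]
  rw [Real.sqrt_eq_rpow, div_eq_mul_inv, ← Real.rpow_neg hQ.le]

/-- For every `Δt₀ ∈ (0,1]` there exists `C(Δt₀) ∈ (0,∞)` such that
`|Ψ_t″(z)| ≤ C(Δt₀) (1 + |z|)` for all `t ∈ [0, Δt₀]` and all `z ∈ ℝ`. -/
theorem psi_second_deriv_linear_growth (Δt₀ : ℝ) (hΔt₀ : Δt₀ ∈ Set.Ioc (0 : ℝ) 1) :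
    ∃ C : ℝ, 0 < C ∧ ∀ t ∈ Set.Icc (0 : ℝ) Δt₀, ∀ z : ℝ,
      |deriv (deriv (Psi t)) z| ≤ C * (1 + |z|) := by
  refine ⟨6 * Real.exp 3, by positivity, ?_⟩
  intro t ht z
  have hexp1 : (1 : ℝ) ≤ Real.exp 3 := Real.one_le_exp (by norm_num)
  rcases eq_or_lt_of_le ht.1 with h0 | htpos
  · -- t = 0
    subst h0
    have e1 : Psi 0 = fun z : ℝ => z - z ^ 3 := funext fun z => by simp [Psi]
    have e2 : deriv (Psi 0) = fun z : ℝ => 1 - 3 * z ^ 2 := funext fun z => by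
      rw [e1]
      have h : HasDerivAt (fun z : ℝ => z - z ^ 3) (1 - 3 * z ^ 2) z := by
        exact ((hasDerivAt_id z).sub (hasDerivAt_pow 3 z)).congr_deriv (by norm_num)
      exact h.deriv
    have h2 : HasDerivAt (fun z : ℝ => 1 - 3 * z ^ 2) (-(6 * z)) z := by
      have := ((hasDerivAt_pow 2 z).const_mul (3 : ℝ)).const_sub 1
      refine this.congr_deriv ?_
      push_cast
      ring
    rw [e2, h2.deriv, abs_neg, abs_mul]
    have : |(6 : ℝ)| = 6 := by norm_num
    rw [this]
    nlinarith [abs_nonneg z]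
  · -- t > 0
    set a := Real.exp (-2 * t) with ha_def
    have ha : 0 < a := Real.exp_pos _
    have ha1 : a ≤ 1 := Real.exp_le_one_iff.mpr (by linarith [ht.1])
    set Q := a + (1 - a) * z ^ 2 with hQ_def
    have hQ : 0 < Q := q_pos ha ha1 z
    have hPsi : Psi t = fun z : ℝ => (z * (a + (1 - a) * z ^ 2) ^ (-(1/2) : ℝ) - z) / t :=
      funext fun z => by
        simp only [Psi, if_neg htpos.ne', Phi_eq ht.1]
        rfl
    have hd1 : deriv (Psi t) = fun z : ℝ => (a * (a + (1 - a) * z ^ 2) ^ (-(3/2) : ℝ) - 1) / t :=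
      funext fun z => by
        rw [hPsi]
        exact (((hasDerivAt_aux ha ha1 z).sub (hasDerivAt_id z)).div_const t).deriv
    have hd2 : HasDerivAt (deriv (Psi t))
        (((-3) * (a * ((1 - a) * z)) * Q ^ (-(5/2) : ℝ)) / t) z := by
      rw [hd1]
      exact (((hasDerivAt_aux2 ha ha1 z).sub_const 1).div_const t)
    rw [hd2.deriv]
    set E := Q ^ (-(5/2) : ℝ) with hE_def
    have hE : 0 < E := Real.rpow_pos_of_pos hQ _
    -- |deriv| = 3*a*(1-a)*E*|z|/t
    have habs : |((-3) * (a * ((1 - a) * z)) * E) / t| = 3 * a * (1 - a) * E * |z| / t := by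
      rw [abs_div, abs_of_pos htpos]
      congr 1
      rw [show (-3) * (a * ((1 - a) * z)) * E = (3 * a * (1 - a) * E) * (-z) by ring,
        abs_mul, abs_neg, abs_of_nonneg (mul_nonneg (mul_nonneg (mul_nonneg (by norm_num) ha.le) (by linarith)) hE.le)]
    rw [habs]
    -- key bounds
    have h1a : 1 - a ≤ 2 * t := by
      have := Real.add_one_le_exp (-(2 * t))
      have : -(2 * t) + 1 ≤ a := by rw [ha_def]; simpa [neg_mul] using this
      linarith
    have haE : a * E ≤ Real.exp 3 := by
      have hEa : E ≤ a ^ (-(5/2) : ℝ) := by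
        rw [hE_def]
        exact Real.rpow_le_rpow_of_nonpos ha (by nlinarith [sq_nonneg z]) (by norm_num)
      have haa : a * a ^ (-(5/2) : ℝ) = Real.exp (3 * t) := by
        rw [ha_def, ← Real.exp_mul, ← Real.exp_add]
        ring_nf
      have h3t : Real.exp (3 * t) ≤ Real.exp 3 := Real.exp_le_exp.mpr (by
        have := ht.2; have := hΔt₀.2; linarith)
      calc a * E ≤ a * a ^ (-(5/2) : ℝ) := by
            exact mul_le_mul_of_nonneg_left hEa ha.le
        _ = Real.exp (3 * t) := haa
        _ ≤ Real.exp 3 := h3t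
    have hfact : (1 - a) * (a * E) ≤ (2 * t) * Real.exp 3 :=
      mul_le_mul h1a haE (mul_pos ha hE).le (by positivity)
    rw [div_le_iff₀ htpos]
    nlinarith [mul_le_mul_of_nonneg_left hfact (by positivity : (0:ℝ) ≤ 3 * |z|),
      abs_nonneg z, htpos, Real.exp_pos 3]

end
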